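/- Let x_1, …, x_n ∈ ℝ^{2n} be linearly independent vectors spanning a Lagrangian subspace, i.e. x_iᵀ J x_j = 0 for all i, j. Let K := X_R X_L⁺ and Ĥ := K + Jᵀ Kᵀ J. Then for every real λ ≠ 0, λ is an eigenvalue of K Kᵀ if and only if λ is an eigenvalue of Ĥ Ĥᵀ. -/
import Mathlib


open Matrix

noncomputable section

/-- The canonical skew-symmetric matrix `J = [[0, I],[-I, 0]]`. -/
def Jmat (n : ℕ) : Matrix (Fin n ⊕ Fin n) (Fin n ⊕ Fin n) ℝ :=
  Matrix.fromBlocks 0 1 (-1) 0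

/-- A matrix `H` is skew-Hamiltonian if `Jᵀ Hᵀ J = H`. -/
def IsSkewHamiltonian {n : ℕ} (H : Matrix (Fin n ⊕ Fin n) (Fin n ⊕ Fin n) ℝ) : Prop :=
  (Jmat n)ᵀ * Hᵀ * Jmat n = H

/-- `X_L = [x_1 ⋯ x_{n-1}]`. -/
def XL {n : ℕ} (x : Fin n → (Fin n ⊕ Fin n) → ℝ) :
    Matrix (Fin n ⊕ Fin n) (Fin (n - 1)) ℝ :=
  Matrix.of fun i j => x ⟨j.1, lt_of_lt_of_le j.2 (Nat.sub_le n 1)⟩ i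

/-- `X_R = [x_2 ⋯ x_n]`. -/
def XR {n : ℕ} (x : Fin n → (Fin n ⊕ Fin n) → ℝ) :
    Matrix (Fin n ⊕ Fin n) (Fin (n - 1)) ℝ :=
  Matrix.of fun i j => x ⟨j.1 + 1, by have := j.2; omega⟩ i

/-- The Moore–Penrose pseudoinverse `X_L⁺ = (X_Lᵀ X_L)⁻¹ X_Lᵀ` of `X_L`
(for `X_L` with linearly independent columns). -/
def XLpinv {n : ℕ} (x : Fin n → (Fin n ⊕ Fin n) → ℝ) :
    Matrix (Fin (n - 1)) (Fin n ⊕ Fin n) ℝ :=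
  ((XL x)ᵀ * XL x)⁻¹ * (XL x)ᵀ

/-- `Ĥ = X_R X_L⁺ + Jᵀ (X_R X_L⁺)ᵀ J`. -/
def Hhat {n : ℕ} (x : Fin n → (Fin n ⊕ Fin n) → ℝ) :
    Matrix (Fin n ⊕ Fin n) (Fin n ⊕ Fin n) ℝ :=
  XR x * XLpinv x + (Jmat n)ᵀ * (XR x * XLpinv x)ᵀ * Jmat n

/-- `H` realizes the Krylov relations `H x_k = x_{k+1}`, `k = 1, …, n-1`. -/
def KrylovRel {n : ℕ} (H : Matrix (Fin n ⊕ Fin n) (Fin n ⊕ Fin n) ℝ)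
    (x : Fin n → (Fin n ⊕ Fin n) → ℝ) : Prop :=
  ∀ k : Fin (n - 1), H *ᵥ x ⟨k.1, lt_of_lt_of_le k.2 (Nat.sub_le n 1)⟩
    = x ⟨k.1 + 1, by have := k.2; omega⟩


lemma Jmat_transpose (n : ℕ) : (Jmat n)ᵀ = -Jmat n := by
  simp [Jmat, fromBlocks_transpose, fromBlocks_neg]

lemma Jmat_mul_Jmat_transpose (n : ℕ) : Jmat n * (Jmat n)ᵀ = 1 := by
  rw [Jmat_transpose]
  simp [Jmat, fromBlocks_multiply, fromBlocks_neg, ← fromBlocks_one]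

lemma Jmat_transpose_mul_Jmat (n : ℕ) : (Jmat n)ᵀ * Jmat n = 1 := by
  rw [Jmat_transpose]
  simp [Jmat, fromBlocks_multiply, fromBlocks_neg, ← fromBlocks_one]

lemma key_iff {m : Type*} [Fintype m] [DecidableEq m]
    (K J : Matrix m m ℝ) (hJt : Jᵀ = -J) (hJJ : J * Jᵀ = 1) (hJtJ : Jᵀ * J = 1)
    (h1 : K * J * K = 0) (h2 : Kᵀ * J * Kᵀ = 0)
    (lam : ℝ) (hlam : lam ≠ 0) :
    (∃ z : m → ℝ, z ≠ 0 ∧ (K * Kᵀ) *ᵥ z = lam • z) ↔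
    (∃ z : m → ℝ, z ≠ 0 ∧ ((K + Jᵀ * Kᵀ * J) * (K + Jᵀ * Kᵀ * J)ᵀ) *ᵥ z = lam • z) := by
  set A := K * Kᵀ with hA
  set B := Jᵀ * (Kᵀ * K) * J with hB
  have hcross1 : K * (Jᵀ * K * J) = 0 := by
    rw [hJt]; have : K * (-J * K * J) = -(K * J * K) * J := by noncomm_ring
    rw [this, h1]; simp
  have hcross2 : (Jᵀ * Kᵀ * J) * Kᵀ = 0 := by
    rw [hJt]; have : -J * Kᵀ * J * Kᵀ = -(J * (Kᵀ * J * Kᵀ)) := by noncomm_ring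
    rw [this, h2]; simp
  have hHH : (K + Jᵀ * Kᵀ * J) * (K + Jᵀ * Kᵀ * J)ᵀ = A + B := by
    have ht : (K + Jᵀ * Kᵀ * J)ᵀ = Kᵀ + Jᵀ * K * J := by
      simp [transpose_mul, mul_assoc]
    rw [ht]
    have expand : (K + Jᵀ * Kᵀ * J) * (Kᵀ + Jᵀ * K * J)
        = A + K * (Jᵀ * K * J) + (Jᵀ * Kᵀ * J) * Kᵀ + Jᵀ * Kᵀ * (J * Jᵀ) * (K * J) := by
      rw [hA]; noncomm_ring
    rw [expand, hcross1, hcross2, hJJ]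
    rw [hB]; noncomm_ring
  have hAB : A * B = 0 := by
    have hKtJKt : Kᵀ * Jᵀ * Kᵀ = 0 := by
      rw [hJt]
      have : Kᵀ * -J * Kᵀ = -(Kᵀ * J * Kᵀ) := by noncomm_ring
      rw [this, h2, neg_zero]
    have : A * B = K * (Kᵀ * Jᵀ * Kᵀ) * (K * J) := by rw [hA, hB]; noncomm_ring
    rw [this, hKtJKt]; simp
  have hBA : B * A = 0 := by
    have : B * A = Jᵀ * Kᵀ * (K * J * K) * Kᵀ := by rw [hA, hB]; noncomm_ring
    rw [this, h1]; simp
  rw [hHH]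
  constructor
  · rintro ⟨z, hz, hAz⟩
    refine ⟨z, hz, ?_⟩
    have hBz : B *ᵥ z = 0 := by
      have h0 : B *ᵥ (A *ᵥ z) = 0 := by
        rw [mulVec_mulVec, hBA, zero_mulVec]
      rw [hAz, mulVec_smul] at h0
      exact (smul_eq_zero.mp h0).resolve_left hlam
    rw [add_mulVec, hAz, hBz, add_zero]
  · rintro ⟨z, hz, hz2⟩
    by_cases hAz : A *ᵥ z = 0
    · have hBz : B *ᵥ z = lam • z := by
        rw [add_mulVec, hAz, zero_add] at hz2; exact hz2
      set u := J *ᵥ z with hu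
      have hu0 : u ≠ 0 := by
        intro h
        apply hz
        have : Jᵀ *ᵥ (J *ᵥ z) = z := by rw [mulVec_mulVec, hJtJ, one_mulVec]
        rw [← hu, h, mulVec_zero] at this
        exact this.symm
      have hKtKu : (Kᵀ * K) *ᵥ u = lam • u := by
        have : J *ᵥ (B *ᵥ z) = J *ᵥ (lam • z) := by rw [hBz]
        rw [mulVec_mulVec, hB] at this
        have e : J * (Jᵀ * (Kᵀ * K) * J) = (Kᵀ * K) * J := by
          have : J * (Jᵀ * (Kᵀ * K) * J) = (J * Jᵀ) * ((Kᵀ * K) * J) := by noncomm_ring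
          rw [this, hJJ, one_mul]
        rw [e, ← mulVec_mulVec, mulVec_smul] at this
        rw [hu]; exact this
      refine ⟨K *ᵥ u, ?_, ?_⟩
      · intro h
        apply hu0
        have : (Kᵀ * K) *ᵥ u = 0 := by rw [← mulVec_mulVec, h, mulVec_zero]
        rw [hKtKu] at this
        exact (smul_eq_zero.mp this).resolve_left hlam
      · have e2 : A * K = K * (Kᵀ * K) := by rw [hA]; noncomm_ring
        calc A *ᵥ (K *ᵥ u) = (A * K) *ᵥ u := by rw [mulVec_mulVec]
          _ = K *ᵥ ((Kᵀ * K) *ᵥ u) := by rw [e2, ← mulVec_mulVec]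
          _ = K *ᵥ (lam • u) := by rw [hKtKu]
          _ = lam • (K *ᵥ u) := by rw [mulVec_smul]
    · refine ⟨A *ᵥ z, hAz, ?_⟩
      have : A *ᵥ ((A + B) *ᵥ z) = A *ᵥ (A *ᵥ z) := by
        rw [mulVec_mulVec, mulVec_mulVec, mul_add, hAB, add_zero]
      rw [hz2, mulVec_smul] at this
      exact this.symm

lemma XLt_J_XR {n : ℕ} (x : Fin n → (Fin n ⊕ Fin n) → ℝ)
    (hLag : ∀ i j : Fin n, x i ⬝ᵥ (Jmat n *ᵥ x j) = 0) :
    (XL x)ᵀ * (Jmat n * XR x) = 0 := by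
  ext k l
  have h := hLag ⟨k.1, lt_of_lt_of_le k.2 (Nat.sub_le n 1)⟩ ⟨l.1 + 1, by have := l.2; omega⟩
  simpa [Matrix.mul_apply, XL, XR, dotProduct, Matrix.mulVec, Finset.mul_sum] using h

lemma XRt_J_XL {n : ℕ} (x : Fin n → (Fin n ⊕ Fin n) → ℝ)
    (hLag : ∀ i j : Fin n, x i ⬝ᵥ (Jmat n *ᵥ x j) = 0) :
    (XR x)ᵀ * (Jmat n * XL x) = 0 := by
  ext k l
  have h := hLag ⟨k.1 + 1, by have := k.2; omega⟩ ⟨l.1, lt_of_lt_of_le l.2 (Nat.sub_le n 1)⟩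
  simpa [Matrix.mul_apply, XL, XR, dotProduct, Matrix.mulVec, Finset.mul_sum] using h

/-- For a basis of a Lagrangian subspace, `K = X_R X_L⁺` and `Ĥ = K + Jᵀ Kᵀ J`, the
nonzero real eigenvalues of `K Kᵀ` and of `Ĥ Ĥᵀ` coincide. -/
theorem eigenvalues_KKT_eq_HHT {n : ℕ} (x : Fin n → (Fin n ⊕ Fin n) → ℝ)
    (hLI : LinearIndependent ℝ x)
    (hLag : ∀ i j : Fin n, x i ⬝ᵥ (Jmat n *ᵥ x j) = 0)
    (lam : ℝ) (hlam : lam ≠ 0) :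
    (∃ z : (Fin n ⊕ Fin n) → ℝ, z ≠ 0 ∧
        (XR x * XLpinv x * (XR x * XLpinv x)ᵀ) *ᵥ z = lam • z) ↔
    (∃ z : (Fin n ⊕ Fin n) → ℝ, z ≠ 0 ∧ (Hhat x * (Hhat x)ᵀ) *ᵥ z = lam • z) := by
  set K := XR x * XLpinv x with hK
  have hz1 : XLpinv x * (Jmat n * XR x) = 0 := by
    rw [XLpinv, Matrix.mul_assoc, XLt_J_XR x hLag, Matrix.mul_zero]
  have h1 : K * Jmat n * K = 0 := by
    have e : K * Jmat n * K = XR x * ((XLpinv x * (Jmat n * XR x)) * XLpinv x) := by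
      rw [hK]; simp only [Matrix.mul_assoc]
    rw [e, hz1]; simp
  have hz2 : (XR x)ᵀ * (Jmat n * (XLpinv x)ᵀ) = 0 := by
    rw [XLpinv, transpose_mul, transpose_transpose]
    have e : (XR x)ᵀ * (Jmat n * (XL x * (((XL x)ᵀ * XL x)⁻¹)ᵀ))
        = ((XR x)ᵀ * (Jmat n * XL x)) * (((XL x)ᵀ * XL x)⁻¹)ᵀ := by
      simp only [Matrix.mul_assoc]
    rw [e, XRt_J_XL x hLag, zero_mul]
  have h2 : Kᵀ * Jmat n * Kᵀ = 0 := by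
    have e : Kᵀ * Jmat n * Kᵀ
        = (XLpinv x)ᵀ * (((XR x)ᵀ * (Jmat n * (XLpinv x)ᵀ)) * (XR x)ᵀ) := by
      rw [hK]; simp only [transpose_mul]; simp only [Matrix.mul_assoc]
    rw [e, hz2]; simp
  have main := key_iff K (Jmat n) (Jmat_transpose n) (Jmat_mul_Jmat_transpose n)
    (Jmat_transpose_mul_Jmat n) h1 h2 lam hlam
  simpa [Hhat, hK] using main
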